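/- Let A be an associative (not necessarily commutative) unital algebra over a field of characteristic zero and let R : A → A be a Rota–Baxter operator of weight 1, i.e. a linear map satisfying R(x)R(y) + R(xy) = R(R(x)y + xR(y)) for all x, y ∈ A. Then the bilinear product a • b := R(a)·b − b·R(a) + b·a is left pre-Lie: for all a, b, c ∈ A, (a • b) • c − a • (b • c) = (b • a) • c − b • (a • c). -/
import Mathlib


/-- The left pre-Lie product `a • b = R(a)·b − b·R(a) + b·a` associated to a
Rota–Baxter operator `R` of weight 1. -/
def rbPreLie {K A : Type*} [CommSemiring K] [Ring A] [Algebra K A]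
    (R : A →ₗ[K] A) (a b : A) : A :=
  R a * b - b * R a + b * a

/-- if `R` is a Rota–Baxter operator of weight 1 on an associative
unital algebra `A` over a field of characteristic zero, then
`a • b := R(a)·b − b·R(a) + b·a` is a left pre-Lie product. -/
theorem rotaBaxter_preLie {K A : Type*} [Field K] [CharZero K] [Ring A] [Algebra K A]
    (R : A →ₗ[K] A)
    (hR : ∀ x y : A, R x * R y + R (x * y) = R (R x * y + x * R y)) :
    ∀ a b c : A,
      rbPreLie R (rbPreLie R a b) c - rbPreLie R a (rbPreLie R b c) =
        rbPreLie R (rbPreLie R b a) c - rbPreLie R b (rbPreLie R a c) := by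
  intro a b c
  have h1 := hR a b
  have h2 := hR b a
  rw [map_add] at h1 h2
  simp only [rbPreLie, map_add, map_sub]
  linear_combination (norm := noncomm_ring)
    c * h1 - c * h2 - h1 * c + h2 * c
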